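/- Let X be a CAT(-1) space and ξ, ξ', η, η' ∈ ∂∞X with (ξ, ξ') ≠ (η, η'). Then for any points p, p', q, q' ∈ X, the functions max{β^p_ξ, β^{p'}_{ξ'}} and max{β^q_η, β^{q'}_{η'}} on X × X do not differ by a constant. -/
import Mathlib


open Filter Topology Metric

/-- `m` is a midpoint of `x` and `y`. -/
def IsMidpoint {X : Type*} [MetricSpace X] (x m y : X) : Prop :=
  dist x m = dist x y / 2 ∧ dist m y = dist x y / 2

/-- `X` is a CAT(-1) space: it is geodesic (has midpoints; for complete spaces this
gives geodesics) and satisfies the hyperbolic median comparison inequality, which for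
geodesic spaces is equivalent to the usual comparison-triangle definition with `ℍ²`. -/
def IsCATminus1 (X : Type*) [MetricSpace X] : Prop :=
  (∀ x y : X, ∃ m, IsMidpoint x m y) ∧
    ∀ x y z m : X, IsMidpoint y m z →
      Real.cosh (dist x m) * Real.cosh (dist y z / 2) ≤
        (Real.cosh (dist x y) + Real.cosh (dist x z)) / 2

/-- `X` is a CAT(0) space: it has midpoints and satisfies the CN-inequality of
Bruhat–Tits, equivalent to the comparison-triangle definition with `𝔼²`. -/
def IsCAT0 (X : Type*) [MetricSpace X] : Prop :=
  (∀ x y : X, ∃ m, IsMidpoint x m y) ∧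
    ∀ x y z m : X, IsMidpoint y m z →
      dist x m ^ 2 ≤ dist x y ^ 2 / 2 + dist x z ^ 2 / 2 - dist y z ^ 2 / 4

/-- A geodesic ray (only the restriction of `c` to `[0, ∞)` matters). -/
def IsRay {X : Type*} [MetricSpace X] (c : ℝ → X) : Prop :=
  ∀ s t : ℝ, 0 ≤ s → 0 ≤ t → dist (c s) (c t) = |s - t|

/-- A parametrized (bi-infinite) geodesic, i.e. an isometric embedding `ℝ → X`. -/
def IsGeodesic {X : Type*} [MetricSpace X] (g : ℝ → X) : Prop :=
  ∀ s t : ℝ, dist (g s) (g t) = |s - t|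

/-- Two rays are asymptotic, i.e. determine the same point of `∂∞X`. -/
def RayEquiv {X : Type*} [MetricSpace X] (c c' : ℝ → X) : Prop :=
  ∃ C : ℝ, ∀ t : ℝ, 0 ≤ t → dist (c t) (c' t) ≤ C

/-- The Busemann function `β^{c 0}_{c(∞)}` of the ray `c`, normalized to vanish at `c 0`.
Since `t ↦ dist y (c t) - t` is nonincreasing and bounded below, this infimum is the
limit `lim_{t → ∞} (dist y (c t) - t)`. -/
noncomputable def busemann {X : Type*} [MetricSpace X] (c : ℝ → X) (y : X) : ℝ :=
  sInf {r : ℝ | ∃ t : ℝ, 0 ≤ t ∧ r = dist y (c t) - t}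

/-- `σ` restricted to `[a, b]` is a geodesic segment. -/
def IsSegParam {X : Type*} [MetricSpace X] (σ : ℝ → X) (a b : ℝ) : Prop :=
  ∀ s t : ℝ, s ∈ Set.Icc a b → t ∈ Set.Icc a b → dist (σ s) (σ t) = |s - t|

/-- Cone-topology convergence of the sequence `x` to the boundary point `c(∞) ∈ ∂∞X`,
where `c` is a geodesic ray issued from the base point `o`: the distances to `o` diverge
and the geodesic segments `σ n` from `o` to `x n` converge pointwise to `c`. -/
def TendstoRay {X : Type*} [MetricSpace X] (x : ℕ → X) (o : X) (c : ℝ → X) : Prop :=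
  IsRay c ∧ c 0 = o ∧
  Tendsto (fun n => dist o (x n)) atTop atTop ∧
  ∃ σ : ℕ → ℝ → X,
    (∀ n, σ n 0 = o ∧ σ n (dist o (x n)) = x n ∧ IsSegParam (σ n) 0 (dist o (x n))) ∧
    ∀ t : ℝ, 0 ≤ t → Tendsto (fun n => σ n t) atTop (𝓝 (c t))


section RHDAux

variable {X : Type*} [MetricSpace X]

lemma bus_nonempty (c : ℝ → X) (x : X) :
    {r : ℝ | ∃ t : ℝ, 0 ≤ t ∧ r = dist x (c t) - t}.Nonempty :=
  ⟨dist x (c 0), 0, le_refl 0, by simp⟩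

lemma bus_bdd {c : ℝ → X} (hc : IsRay c) (x : X) :
    BddBelow {r : ℝ | ∃ t : ℝ, 0 ≤ t ∧ r = dist x (c t) - t} := by
  refine ⟨-(dist x (c 0)), ?_⟩
  rintro r ⟨t, ht, rfl⟩
  have h1 : dist (c 0) (c t) = t := by
    rw [hc 0 t le_rfl ht, abs_of_nonpos (by linarith)]; ring
  have h2 := dist_triangle (c 0) x (c t)
  rw [dist_comm (c 0) x] at h2
  rw [h1] at h2
  linarith

lemma busemann_le {c : ℝ → X} (hc : IsRay c) (x : X) {s : ℝ} (hs : 0 ≤ s) :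
    busemann c x ≤ dist x (c s) - s :=
  csInf_le (bus_bdd hc x) ⟨s, hs, rfl⟩

lemma busemann_ray {c : ℝ → X} (hc : IsRay c) {t : ℝ} (ht : 0 ≤ t) :
    busemann c (c t) = -t := by
  refine le_antisymm ?_ ?_
  · have := busemann_le hc (c t) ht
    simpa using this
  · refine le_csInf (bus_nonempty c (c t)) ?_
    rintro r ⟨u, hu, rfl⟩
    have h1 : dist (c t) (c u) = |t - u| := hc t u ht hu
    have h2 : u - t ≤ |t - u| := by rw [abs_sub_comm]; exact le_abs_self _
    linarith [h1 ▸ h2]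

lemma dist_ray_antitone {c : ℝ → X} (hc : IsRay c) (x : X) {s t : ℝ}
    (hs : 0 ≤ s) (hst : s ≤ t) :
    dist x (c t) - t ≤ dist x (c s) - s := by
  have h1 : dist (c s) (c t) = t - s := by
    rw [hc s t hs (by linarith), abs_of_nonpos (by linarith)]; ring
  have h2 := dist_triangle x (c s) (c t)
  linarith

lemma bus_approx {c : ℝ → X} (hc : IsRay c) (x : X) {ε : ℝ} (hε : 0 < ε) :
    ∃ t₁ : ℝ, 0 ≤ t₁ ∧ ∀ t, t₁ ≤ t → dist x (c t) - t ≤ busemann c x + ε := by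
  obtain ⟨r, ⟨u, hu, rfl⟩, hr⟩ := exists_lt_of_csInf_lt (bus_nonempty c x)
    (lt_add_of_pos_right (busemann c x) hε)
  exact ⟨u, hu, fun t htu => le_trans (dist_ray_antitone hc x hu htu) hr.le⟩

lemma my_cosh_le_exp {x : ℝ} (hx : 0 ≤ x) : Real.cosh x ≤ Real.exp x := by
  rw [Real.cosh_eq]
  have h1 : Real.exp (-x) ≤ Real.exp x := Real.exp_le_exp.2 (by linarith)
  linarith

lemma exp_half_le_cosh (x : ℝ) : Real.exp x / 2 ≤ Real.cosh x := by
  rw [Real.cosh_eq]; linarith [Real.exp_pos (-x)]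

lemma my_sinh_le (x : ℝ) : Real.sinh x ≤ Real.exp x / 2 := by
  rw [Real.sinh_eq]; linarith [Real.exp_pos (-x)]

lemma exp_quarter_le_sinh {x : ℝ} (hx : 1 ≤ x) : Real.exp x / 4 ≤ Real.sinh x := by
  rw [Real.sinh_eq]
  have h1 : Real.exp (-x) ≤ Real.exp (-1 : ℝ) := Real.exp_le_exp.2 (by linarith)
  have h2 : Real.exp (-1 : ℝ) ≤ 1/2 := by
    rw [Real.exp_neg]
    have h3 : (2:ℝ) ≤ Real.exp 1 := by linarith [Real.add_one_le_exp (1:ℝ)]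
    rw [inv_le_comm₀ (Real.exp_pos 1) (by norm_num)] at *
    · linarith
  have h4 : (1:ℝ) ≤ Real.exp x := by
    rw [show (1:ℝ) = Real.exp 0 by simp]
    exact Real.exp_le_exp.2 (by linarith)
  linarith

lemma sinh_rec (A T : ℝ) :
    Real.sinh (A + T) = 2 * Real.cosh T * Real.sinh A - Real.sinh (A - T) := by
  rw [Real.sinh_add, Real.sinh_sub]; ring

lemma cosh_dist_le {X : Type*} [MetricSpace X] {x y : X} {b : ℝ}
    (h : dist x y ≤ b) : Real.cosh (dist x y) ≤ Real.exp b :=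
  le_trans (my_cosh_le_exp dist_nonneg) (Real.exp_le_exp.2 h)

lemma discrete_comp {c1 : ℝ} (hc1 : 1 ≤ c1) (w σ : ℕ → ℝ)
    (hσ0 : σ 0 = 0) (hσ1 : σ 1 = 1)
    (hσ : ∀ j : ℕ, σ (j+2) = 2*c1*σ (j+1) - σ j)
    (hw : ∀ j : ℕ, 2*c1*w (j+1) ≤ w j + w (j+2)) :
    ∀ k : ℕ, w 1 * σ (k+1) ≤ w 0 * σ k + w (k+1) := by
  suffices h : ∀ k : ℕ, 0 ≤ w 0 * σ k + w (k+1) - w 1 * σ (k+1) ∧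
      w 0 * σ k + w (k+1) - w 1 * σ (k+1) ≤
        w 0 * σ (k+1) + w (k+2) - w 1 * σ (k+2) by
    intro k; linarith [(h k).1]
  intro k
  induction k with
  | zero =>
      constructor
      · rw [hσ0, hσ1]; ring_nf; nlinarith [hw 0]
      · have h2 := hσ 0
        rw [hσ0, hσ1] at *
        rw [h2]
        nlinarith [hw 0]
  | succ n ih =>
      obtain ⟨ih1, ih2⟩ := ih
      have hA1 : 0 ≤ w 0 * σ (n+1) + w (n+2) - w 1 * σ (n+2) := le_trans ih1 ih2
      constructor
      · exact hA1
      · have key : w 0 * σ (n+2) + w (n+3) - w 1 * σ (n+3)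
            - 2*c1*(w 0 * σ (n+1) + w (n+2) - w 1 * σ (n+2))
            + (w 0 * σ n + w (n+1) - w 1 * σ (n+1))
            = w (n+3) - 2*c1*w (n+2) + w (n+1) := by
          have e1 := hσ n
          have e2 := hσ (n+1)
          linear_combination w 0 * e1 - w 1 * e2
        have hwn := hw (n+1)
        nlinarith [mul_nonneg (by linarith : (0:ℝ) ≤ 2*c1 - 2) hA1]

variable {X : Type*} [MetricSpace X]

lemma dist_ray {c : ℝ → X} (hc : IsRay c) {s t : ℝ} (hs : 0 ≤ s) (hst : s ≤ t) :
    dist (c s) (c t) = t - s := by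
  rw [hc s t hs (by linarith), abs_of_nonpos (by linarith)]; ring

lemma rayEquiv_core (hX : IsCATminus1 X) {c e : ℝ → X}
    (hc : IsRay c) (he : IsRay e) {C : ℝ}
    (hfg : ∀ z, busemann c z = busemann e z + C) : RayEquiv c e := by
  set a := dist (c 0) (e 0) with ha
  set K₂ := Real.log (4 * (Real.exp (a - C) + Real.exp 1)) with hK₂
  refine ⟨max (2*(max C 0 + 1) + a) (|C| + K₂), ?_⟩
  intro T hT0
  rcases le_or_gt T (max C 0 + 1) with hTc | hTc
  · have h1 : dist (c 0) (c T) = T - 0 := dist_ray hc le_rfl hT0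
    have h2 : dist (e 0) (e T) = T - 0 := dist_ray he le_rfl hT0
    rw [sub_zero] at h1 h2
    calc dist (c T) (e T) ≤ dist (c T) (c 0) + dist (c 0) (e 0) + dist (e 0) (e T) :=
          dist_triangle4 _ _ _ _
      _ = 2*T + a := by rw [dist_comm (c T) (c 0), h1, h2]; ring
      _ ≤ 2*(max C 0 + 1) + a := by linarith
      _ ≤ _ := le_max_left _ _
  · have hT1 : (1:ℝ) ≤ T := by have := le_max_right C 0; linarith
    set s := T - C with hs
    have hs1 : (1:ℝ) ≤ s := by have := le_max_left C 0; simp only [hs]; linarith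
    have hs0 : (0:ℝ) ≤ s := by linarith
    have hbe : busemann e (c s) = -s - C := by
      have hb1 : busemann c (c s) = -s := busemann_ray hc hs0
      have hb2 := hfg (c s)
      linarith
    obtain ⟨t₁, ht₁0, ht₁⟩ := bus_approx he (c s) one_pos
    set k' : ℕ := ⌈t₁⌉₊ with hk'
    set w : ℕ → ℝ := fun j => Real.cosh (dist (c s) (e ((j:ℝ) * T))) with hwdef
    set σ : ℕ → ℝ := fun j => Real.sinh ((j:ℝ) * T) / Real.sinh T with hσdef
    have hsinhT : 0 < Real.sinh T := Real.sinh_pos_iff.2 (by linarith)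
    have hc1 : 1 ≤ Real.cosh T := Real.one_le_cosh T
    have hσ0 : σ 0 = 0 := by simp [hσdef]
    have hσ1 : σ 1 = 1 := by simp [hσdef, div_self hsinhT.ne']
    have hσrec : ∀ j : ℕ, σ (j+2) = 2 * Real.cosh T * σ (j+1) - σ j := by
      intro j
      have e1 : ((j+2:ℕ):ℝ) * T = ((j+1:ℕ):ℝ) * T + T := by push_cast; ring
      have e2 : ((j:ℕ):ℝ) * T = ((j+1:ℕ):ℝ) * T - T := by push_cast; ring
      simp only [hσdef, e1, e2, sinh_rec (((j+1:ℕ):ℝ) * T) T]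
      ring
    have hjT : ∀ j : ℕ, (0:ℝ) ≤ (j:ℝ) * T := fun j =>
      mul_nonneg (Nat.cast_nonneg j) (by linarith)
    have hrec : ∀ j : ℕ, 2 * Real.cosh T * w (j+1) ≤ w j + w (j+2) := by
      intro j
      have hd2 : dist (e ((j:ℝ)*T)) (e (((j+2:ℕ):ℝ)*T)) = 2*T := by
        rw [dist_ray he (hjT j) (by push_cast; nlinarith)]
        push_cast; ring
      have hd1 : dist (e ((j:ℝ)*T)) (e (((j+1:ℕ):ℝ)*T)) = T := by
        rw [dist_ray he (hjT j) (by push_cast; nlinarith)]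
        push_cast; ring
      have hd1' : dist (e (((j+1:ℕ):ℝ)*T)) (e (((j+2:ℕ):ℝ)*T)) = T := by
        rw [dist_ray he (hjT (j+1)) (by push_cast; nlinarith)]
        push_cast; ring
      have hmid : IsMidpoint (e ((j:ℝ)*T)) (e (((j+1:ℕ):ℝ)*T)) (e (((j+2:ℕ):ℝ)*T)) := by
        constructor
        · rw [hd1, hd2]; ring
        · rw [hd1', hd2]; ring
      have hin := hX.2 (c s) (e ((j:ℝ)*T)) (e (((j+2:ℕ):ℝ)*T)) (e (((j+1:ℕ):ℝ)*T)) hmid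
      rw [hd2] at hin
      have h2T : 2*T/2 = T := by ring
      rw [h2T] at hin
      simp only [hwdef]
      linarith [hin]
    have hdisc := discrete_comp hc1 w σ hσ0 hσ1 hσrec hrec k'
    -- multiply through by sinh T
    have hmain : w 1 * Real.sinh (((k'+1:ℕ):ℝ) * T) ≤
        w 0 * Real.sinh ((k':ℝ) * T) + w (k'+1) * Real.sinh T := by
      have h2 := mul_le_mul_of_nonneg_right hdisc hsinhT.le
      simp only [hσdef] at h2
      rw [add_mul, mul_assoc, mul_assoc, div_mul_cancel₀ _ hsinhT.ne',
        div_mul_cancel₀ _ hsinhT.ne'] at h2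
      linarith
    -- bounds
    have hw1lb : Real.exp (dist (c s) (e T)) / 2 ≤ w 1 := by
      have : ((1:ℕ):ℝ) * T = T := by norm_num
      simp only [hwdef, this]
      exact exp_half_le_cosh _
    have hsk1 : (1:ℝ) ≤ ((k'+1:ℕ):ℝ) * T := by
      push_cast
      nlinarith [Nat.cast_nonneg (α := ℝ) k']
    have hslb : Real.exp (((k'+1:ℕ):ℝ) * T) / 4 ≤ Real.sinh (((k'+1:ℕ):ℝ) * T) :=
      exp_quarter_le_sinh hsk1
    have hw0ub : w 0 ≤ Real.exp (s + a) := by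
      have hd : dist (c s) (e 0) ≤ s + a := by
        have := dist_triangle (c s) (c 0) (e 0)
        rw [dist_comm (c s) (c 0), dist_ray hc le_rfl hs0] at this
        linarith
      have h0 : ((0:ℕ):ℝ) * T = 0 := by norm_num
      simp only [hwdef, h0]
      exact cosh_dist_le hd
    have hwk1ub : w (k'+1) ≤ Real.exp ((k':ℝ) * T + 1) := by
      have htk : t₁ ≤ ((k'+1:ℕ):ℝ) * T := by
        have h1 : t₁ ≤ (k':ℝ) := Nat.le_ceil t₁
        push_cast
        nlinarith [Nat.cast_nonneg (α := ℝ) k']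
      have hd := ht₁ _ htk
      rw [hbe] at hd
      have hd' : dist (c s) (e (((k'+1:ℕ):ℝ) * T)) ≤ (k':ℝ) * T + 1 := by
        have : ((k'+1:ℕ):ℝ) * T = (k':ℝ)*T + T := by push_cast; ring
        rw [this] at hd ⊢
        simp only [hs] at *
        linarith
      simp only [hwdef]
      exact cosh_dist_le hd'
    have hsinhk' : Real.sinh ((k':ℝ) * T) ≤ Real.exp ((k':ℝ) * T) / 2 := my_sinh_le _
    have hsinhk'0 : 0 ≤ Real.sinh ((k':ℝ) * T) := Real.sinh_nonneg_iff.2 (hjT k')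
    have hsinhTub : Real.sinh T ≤ Real.exp T / 2 := my_sinh_le _
    -- combine
    have hLHS : Real.exp (dist (c s) (e T)) / 2 * (Real.exp (((k'+1:ℕ):ℝ) * T) / 4) ≤
        w 1 * Real.sinh (((k'+1:ℕ):ℝ) * T) :=
      mul_le_mul hw1lb hslb (by positivity) (by simp only [hwdef]; positivity)
    have hRHS1 : w 0 * Real.sinh ((k':ℝ) * T) ≤ Real.exp (s + a) * (Real.exp ((k':ℝ) * T) / 2) :=
      mul_le_mul hw0ub hsinhk' hsinhk'0 (Real.exp_pos _).le
    have hRHS2 : w (k'+1) * Real.sinh T ≤ Real.exp ((k':ℝ) * T + 1) * (Real.exp T / 2) :=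
      mul_le_mul hwk1ub hsinhTub hsinhT.le (Real.exp_pos _).le
    have hE1 : Real.exp (s + a) * Real.exp ((k':ℝ) * T) =
        Real.exp (a - C) * Real.exp (((k'+1:ℕ):ℝ) * T) := by
      rw [← Real.exp_add, ← Real.exp_add]
      congr 1
      push_cast
      simp only [hs]
      ring
    have hE2 : Real.exp ((k':ℝ) * T + 1) * Real.exp T =
        Real.exp 1 * Real.exp (((k'+1:ℕ):ℝ) * T) := by
      rw [← Real.exp_add, ← Real.exp_add]
      congr 1
      push_cast
      ring
    set P := Real.exp (((k'+1:ℕ):ℝ) * T) with hP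
    have hR1' : w 0 * Real.sinh ((k':ℝ) * T) ≤ Real.exp (a - C) * P / 2 := by
      calc w 0 * Real.sinh ((k':ℝ) * T) ≤ Real.exp (s + a) * (Real.exp ((k':ℝ) * T) / 2) := hRHS1
        _ = Real.exp (s + a) * Real.exp ((k':ℝ) * T) / 2 := by ring
        _ = Real.exp (a - C) * P / 2 := by rw [hE1]
    have hR2' : w (k'+1) * Real.sinh T ≤ Real.exp 1 * P / 2 := by
      calc w (k'+1) * Real.sinh T ≤ Real.exp ((k':ℝ) * T + 1) * (Real.exp T / 2) := hRHS2
        _ = Real.exp ((k':ℝ) * T + 1) * Real.exp T / 2 := by ring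
        _ = Real.exp 1 * P / 2 := by rw [hE2]
    have hL' : Real.exp (dist (c s) (e T)) * P / 8 ≤ w 1 * Real.sinh (((k'+1:ℕ):ℝ) * T) := by
      calc Real.exp (dist (c s) (e T)) * P / 8
          = Real.exp (dist (c s) (e T)) / 2 * (P / 4) := by ring
        _ ≤ w 1 * Real.sinh (((k'+1:ℕ):ℝ) * T) := hLHS
    have hcomb : Real.exp (dist (c s) (e T)) * P ≤
        4 * (Real.exp (a - C) + Real.exp 1) * P := by
      calc Real.exp (dist (c s) (e T)) * P
          = 8 * (Real.exp (dist (c s) (e T)) * P / 8) := by ring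
        _ ≤ 8 * (Real.exp (a - C) * P / 2 + Real.exp 1 * P / 2) := by linarith
        _ = 4 * (Real.exp (a - C) + Real.exp 1) * P := by ring
    have hexpD : Real.exp (dist (c s) (e T)) ≤ 4 * (Real.exp (a - C) + Real.exp 1) :=
      le_of_mul_le_mul_right hcomb (by rw [hP]; exact Real.exp_pos _)
    have hD : dist (c s) (e T) ≤ K₂ := by
      have hlog := Real.log_le_log (Real.exp_pos (dist (c s) (e T))) hexpD
      rwa [Real.log_exp] at hlog
    have hcTs : dist (c T) (c s) = |C| := by
      rw [hc T s hT0 hs0]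
      simp only [hs]
      congr 1
      ring
    calc dist (c T) (e T) ≤ dist (c T) (c s) + dist (c s) (e T) := dist_triangle _ _ _
      _ ≤ |C| + K₂ := by rw [hcTs]; linarith
      _ ≤ _ := le_max_right _ _

lemma max_decouple_left {X : Type*} [MetricSpace X]
    {cξ cξ' cη cη' : ℝ → X}
    (hξ : IsRay cξ) (hξ' : IsRay cξ') (hη : IsRay cη) (hη' : IsRay cη')
    {C : ℝ}
    (hC : ∀ z z' : X, max (busemann cξ z) (busemann cξ' z') =
        max (busemann cη z) (busemann cη' z') + C) :
    ∀ z : X, busemann cξ z = busemann cη z + C := by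
  intro z
  have hle : busemann cξ z ≤ busemann cη z + C := by
    set s := max 0 (-(busemann cη z)) with hs
    have hs0 : 0 ≤ s := le_max_left _ _
    have h := hC z (cη' s)
    rw [busemann_ray hη' hs0] at h
    have hmax : max (busemann cη z) (-s) = busemann cη z := by
      apply max_eq_left
      rw [neg_le]
      exact le_max_right _ _
    rw [hmax] at h
    calc busemann cξ z ≤ max (busemann cξ z) (busemann cξ' (cη' s)) := le_max_left _ _
      _ = busemann cη z + C := h
  have hge : busemann cη z + C ≤ busemann cξ z := by
    set s := max 0 (-(busemann cξ z)) with hs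
    have hs0 : 0 ≤ s := le_max_left _ _
    have h := hC z (cξ' s)
    rw [busemann_ray hξ' hs0] at h
    have hmax : max (busemann cξ z) (-s) = busemann cξ z := by
      apply max_eq_left
      rw [neg_le]
      exact le_max_right _ _
    rw [hmax] at h
    calc busemann cη z + C ≤ max (busemann cη z) (busemann cη' (cξ' s)) + C := by
          linarith [le_max_left (busemann cη z) (busemann cη' (cξ' s))]
      _ = busemann cξ z := h.symm
  linarith

lemma max_decouple_right {X : Type*} [MetricSpace X]
    {cξ cξ' cη cη' : ℝ → X}
    (hξ : IsRay cξ) (hξ' : IsRay cξ') (hη : IsRay cη) (hη' : IsRay cη')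
    {C : ℝ}
    (hC : ∀ z z' : X, max (busemann cξ z) (busemann cξ' z') =
        max (busemann cη z) (busemann cη' z') + C) :
    ∀ z' : X, busemann cξ' z' = busemann cη' z' + C := by
  intro z'
  have hle : busemann cξ' z' ≤ busemann cη' z' + C := by
    set t := max 0 (-(busemann cη' z')) with hts
    have ht0 : 0 ≤ t := le_max_left _ _
    have h := hC (cη t) z'
    rw [busemann_ray hη ht0] at h
    have hmax : max (-t) (busemann cη' z') = busemann cη' z' := by
      apply max_eq_right
      rw [neg_le]
      exact le_max_right _ _
    rw [hmax] at h
    calc busemann cξ' z' ≤ max (busemann cξ (cη t)) (busemann cξ' z') := le_max_right _ _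
      _ = busemann cη' z' + C := h
  have hge : busemann cη' z' + C ≤ busemann cξ' z' := by
    set t := max 0 (-(busemann cξ' z')) with hts
    have ht0 : 0 ≤ t := le_max_left _ _
    have h := hC (cξ t) z'
    rw [busemann_ray hξ ht0] at h
    have hmax : max (-t) (busemann cξ' z') = busemann cξ' z' := by
      apply max_eq_right
      rw [neg_le]
      exact le_max_right _ _
    rw [hmax] at h
    calc busemann cη' z' + C ≤ max (busemann cη (cξ t)) (busemann cη' z') + C := by
          linarith [le_max_right (busemann cη (cξ t)) (busemann cη' z')]
      _ = busemann cξ' z' := h.symm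
  linarith


end RHDAux

/-- Distinct pairs of boundary points give distinct regular horofunctions:
if `(ξ, ξ') ≠ (η, η')` (here `ξ, ξ', η, η'` are represented by rays `cξ, cξ', cη, cη'`
from `p, p', q, q'` respectively, and the Busemann function `β^p_ξ` vanishing at `p` is
`busemann cξ`), then the functions `(z,z') ↦ max (β^p_ξ z) (β^p'_ξ' z')` and
`(z,z') ↦ max (β^q_η z) (β^q'_η' z')` on `X × X` do not differ by a constant. -/
theorem regular_horofunctions_distinct {X : Type*} [MetricSpace X] [ProperSpace X]
    (hX : IsCATminus1 X) (p p' q q' : X) (cξ cξ' cη cη' : ℝ → X)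
    (h1 : IsRay cξ) (h2 : IsRay cξ') (h3 : IsRay cη) (h4 : IsRay cη')
    (hp : cξ 0 = p) (hp' : cξ' 0 = p') (hq : cη 0 = q) (hq' : cη' 0 = q')
    (hne : ¬ (RayEquiv cξ cη ∧ RayEquiv cξ' cη')) :
    ¬ ∃ C : ℝ, ∀ z z' : X,
        max (busemann cξ z) (busemann cξ' z') =
          max (busemann cη z) (busemann cη' z') + C := by
  rintro ⟨C, hC⟩
  exact hne ⟨rayEquiv_core hX h1 h3 (max_decouple_left h1 h2 h3 h4 hC),
    rayEquiv_core hX h2 h4 (max_decouple_right h1 h2 h3 h4 hC)⟩
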